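/- Let U be a finite set of size k ≥ 1, let 0 < α < 1, 0 < δ < 1, 1 ≤ s ≤ k, and let T ⊆ U be fixed. Let S_1, …, S_t be independent uniformly random s-element subsets of U, and say that S_i has an unusual intersection with T if either (|T| ≥ δk and |S_i ∩ T| ∉ [(1−α)·s·|T|/k, (1+α)·s·|T|/k]) or (|T| < δk and |S_i ∩ T| > (1+α)·δ·s). Then the probability that more than 4·t·exp(−α²·δ·s/3) of the sets S_1, …, S_t have an unusual intersection with T is at most exp(−(t/3)·exp(−α²·δ·s/3)). -/

import Mathlib

open Finset

/-- `S` has an *unusual intersection* with `T` (within a universe `U` of size `k`,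
with parameters `α`, `δ` and sample size `s`) if either `|T| ≥ δk` and
`|S ∩ T| ∉ [(1−α)·s·|T|/k, (1+α)·s·|T|/k]`, or `|T| < δk` and `|S ∩ T| > (1+α)·δ·s`. -/
def UnusualIntersection {U : Type*} [Fintype U] [DecidableEq U]
    (α δ : ℝ) (s : ℕ) (T S : Finset U) : Prop :=
  (δ * Fintype.card U ≤ (T.card : ℝ) ∧
      ((S ∩ T).card : ℝ) ∉
        Set.Icc ((1 - α) * s * T.card / Fintype.card U)
          ((1 + α) * s * T.card / Fintype.card U)) ∨
  ((T.card : ℝ) < δ * Fintype.card U ∧ (1 + α) * δ * s < ((S ∩ T).card : ℝ))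

noncomputable instance {U : Type*} [Fintype U] [DecidableEq U] (α δ : ℝ) (s : ℕ) (T S : Finset U) :
    Decidable (UnusualIntersection α δ s T S) := by
  unfold UnusualIntersection; infer_instance



section Aux
variable {U : Type*} [Fintype U] [DecidableEq U]

lemma log_ge_twothirds {x : ℝ} (h0 : 0 ≤ x) (h1 : x ≤ 1) :
    2/3 * x ≤ Real.log (1 + x) := by
  have hx1 : (0:ℝ) < 1 + x := by linarith
  have hconv := convexOn_exp.2 (Set.mem_univ (0:ℝ)) (Set.mem_univ (Real.log 2))
    (sub_nonneg.2 h1) h0 (by ring)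
  simp only [smul_eq_mul, mul_zero, zero_add, Real.exp_zero, Real.exp_log two_pos] at hconv
  have hexp : Real.exp (x * Real.log 2) ≤ 1 + x := by linarith
  have hlog2 : (2:ℝ)/3 ≤ Real.log 2 := by
    have := Real.log_two_gt_d9; linarith
  have h23 : Real.exp (2/3 * x) ≤ 1 + x := by
    refine le_trans (Real.exp_le_exp.2 ?_) hexp
    nlinarith
  exact (Real.le_log_iff_exp_le hx1).2 h23

lemma chernoff_upper_aux {x : ℝ} (h0 : 0 ≤ x) (h1 : x ≤ 1) :
    x - (1 + x) * Real.log (1 + x) ≤ -x^2/3 := by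
  set F : ℝ → ℝ := fun y => -y + (1+y) * Real.log (1+y) - y^2/3 with hF
  have hder : ∀ y ∈ Set.Icc (0:ℝ) 1, HasDerivAt F (Real.log (1+y) - 2*y/3) y := by
    intro y hy
    have hy1 : (0:ℝ) < 1 + y := by have := hy.1; linarith
    have h1' : HasDerivAt (fun y : ℝ => 1 + y) 1 y := (hasDerivAt_id y).const_add 1
    have hlog : HasDerivAt (fun y : ℝ => Real.log (1+y)) (1/(1+y)) y := by
      simpa using h1'.log (ne_of_gt hy1)
    have hmul : HasDerivAt (fun y : ℝ => (1+y) * Real.log (1+y))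
        (1 * Real.log (1+y) + (1+y) * (1/(1+y))) y := h1'.mul hlog
    have hsq : HasDerivAt (fun y : ℝ => y^2/3) ((2*y^(2-1))/3) y := by
      exact_mod_cast (hasDerivAt_pow 2 y).div_const 3
    have := ((hasDerivAt_id y).neg.add hmul).sub hsq
    refine this.congr_deriv ?_
    field_simp
    rw [show (2:ℕ) - 1 = 1 from rfl]
    ring
  have hdiff : DifferentiableOn ℝ F (Set.Icc (0:ℝ) 1) :=
    fun y hy => ((hder y hy).differentiableAt).differentiableWithinAt
  have hmono : MonotoneOn F (Set.Icc (0:ℝ) 1) := by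
    refine monotoneOn_of_deriv_nonneg (convex_Icc 0 1) hdiff.continuousOn
      (hdiff.mono interior_subset) ?_
    intro y hy
    rw [interior_Icc] at hy
    have h := (hder y ⟨le_of_lt hy.1, le_of_lt hy.2⟩).deriv
    rw [h]
    have := log_ge_twothirds (le_of_lt hy.1) (le_of_lt hy.2)
    linarith
  have h0' : F 0 = 0 := by simp [hF]
  have := hmono (Set.mem_Icc.2 ⟨le_refl 0, zero_le_one⟩) (Set.mem_Icc.2 ⟨h0, h1⟩) h0
  rw [h0'] at this
  simp only [hF] at this
  linarith

lemma chernoff_lower_aux {x : ℝ} (h0 : 0 ≤ x) (h1 : x < 1) :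
    -x - (1 - x) * Real.log (1 - x) ≤ -x^2/2 := by
  set G : ℝ → ℝ := fun y => y + (1-y) * Real.log (1-y) - y^2/2 with hG
  have hder : ∀ y ∈ Set.Icc (0:ℝ) x, HasDerivAt G (-Real.log (1-y) - y) y := by
    intro y hy
    have hy1 : (0:ℝ) < 1 - y := by have := hy.2; linarith
    have h1' : HasDerivAt (fun y : ℝ => 1 - y) (-1) y := by
      simpa using (hasDerivAt_id' (x := y)).const_sub 1
    have hlog : HasDerivAt (fun y : ℝ => Real.log (1-y)) (-1/(1-y)) y := by
      simpa using h1'.log (ne_of_gt hy1)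
    have hmul : HasDerivAt (fun y : ℝ => (1-y) * Real.log (1-y))
        ((-1) * Real.log (1-y) + (1-y) * (-1/(1-y))) y := h1'.mul hlog
    have hsq : HasDerivAt (fun y : ℝ => y^2/2) ((2*y^(2-1))/2) y := by
      exact_mod_cast (hasDerivAt_pow 2 y).div_const 2
    have := ((hasDerivAt_id y).add hmul).sub hsq
    refine this.congr_deriv ?_
    field_simp
    ring
  have hdiff : DifferentiableOn ℝ G (Set.Icc (0:ℝ) x) :=
    fun y hy => ((hder y hy).differentiableAt).differentiableWithinAt
  have hmono : MonotoneOn G (Set.Icc (0:ℝ) x) := by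
    refine monotoneOn_of_deriv_nonneg (convex_Icc 0 x) hdiff.continuousOn
      (hdiff.mono interior_subset) ?_
    intro y hy
    rw [interior_Icc] at hy
    have h := (hder y ⟨le_of_lt hy.1, le_of_lt hy.2⟩).deriv
    rw [h]
    have hy1 : (0:ℝ) < 1 - y := by nlinarith [hy.2]
    have := Real.log_le_sub_one_of_pos hy1
    linarith
  have h0' : G 0 = 0 := by simp [hG]
  have := hmono (Set.mem_Icc.2 ⟨le_refl 0, h0⟩) (Set.mem_Icc.2 ⟨h0, le_refl x⟩) h0
  rw [h0'] at this
  simp only [hG] at this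
  linarith

lemma count_mem_powersetCard (u : U) (r : ℕ) :
    ((powersetCard (r+1) (univ : Finset U)).filter (fun J => u ∈ J)).card
      = (Fintype.card U - 1).choose r := by
  have h : ((powersetCard (r+1) (univ : Finset U)).filter (fun J => u ∈ J)).card
      = (powersetCard r ((univ : Finset U).erase u)).card := by
    apply Finset.card_nbij' (fun J => J.erase u) (fun J => insert u J)
    · intro J hJ
      simp only [mem_coe, mem_filter, mem_powersetCard_univ] at hJ
      rw [mem_coe, mem_powersetCard]
      refine ⟨fun x hx => ?_, ?_⟩
      · rw [Finset.mem_erase] at hx ⊢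
        exact ⟨hx.1, mem_univ x⟩
      · rw [Finset.card_erase_of_mem hJ.2, hJ.1]; omega
    · intro J hJ
      rw [mem_coe, mem_powersetCard] at hJ
      have hu : u ∉ J := fun h => (Finset.mem_erase.1 (hJ.1 h)).1 rfl
      simp only [mem_coe, mem_filter, mem_powersetCard_univ, Finset.card_insert_of_notMem hu, hJ.2,
        Finset.mem_insert_self, and_true]
    · intro J hJ
      simp only [mem_coe, mem_filter] at hJ
      exact Finset.insert_erase hJ.2
    · intro J hJ
      rw [mem_coe, mem_powersetCard] at hJ
      have hu : u ∉ J := fun h => (Finset.mem_erase.1 (hJ.1 h)).1 rfl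
      exact Finset.erase_insert hu
  rw [h, Finset.card_powersetCard, Finset.card_erase_of_mem (Finset.mem_univ u),
    Finset.card_univ]

lemma sum_inter_card (T : Finset U) (r : ℕ) :
    ∑ J ∈ powersetCard (r+1) (univ : Finset U), (J ∩ T).card
      = T.card * (Fintype.card U - 1).choose r := by
  have h1 : ∀ J : Finset U, (J ∩ T).card = ∑ u ∈ T, if u ∈ J then 1 else 0 := by
    intro J
    rw [inter_comm, ← Finset.filter_mem_eq_inter, Finset.card_filter]
  calc ∑ J ∈ powersetCard (r+1) (univ : Finset U), (J ∩ T).card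
      = ∑ J ∈ powersetCard (r+1) (univ : Finset U), ∑ u ∈ T, if u ∈ J then 1 else 0 := by
        exact Finset.sum_congr rfl fun J _ => h1 J
    _ = ∑ u ∈ T, ∑ J ∈ powersetCard (r+1) (univ : Finset U), if u ∈ J then 1 else 0 :=
        Finset.sum_comm
    _ = ∑ u ∈ T, (Fintype.card U - 1).choose r := by
        refine Finset.sum_congr rfl fun u _ => ?_
        rw [← Finset.card_filter, count_mem_powersetCard]
    _ = T.card * (Fintype.card U - 1).choose r := by
        rw [Finset.sum_const, smul_eq_mul]

lemma sum_powersetCard_succ (n : ℕ) (f : Finset U → ℝ) :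
    ∑ J ∈ powersetCard n (univ : Finset U), ∑ x ∈ univ \ J, f (insert x J)
      = (n+1) * ∑ S ∈ powersetCard (n+1) (univ : Finset U), f S := by
  have lhs := Finset.sum_sigma' (powersetCard n (univ : Finset U))
    (fun J => (univ : Finset U) \ J) (fun J x => f (insert x J))
  have rhs := Finset.sum_sigma' (powersetCard (n+1) (univ : Finset U))
    (fun S => S) (fun S _ => f S)
  rw [lhs]
  have key : ∑ p ∈ (powersetCard n (univ : Finset U)).sigma (fun J => (univ : Finset U) \ J),
      f (insert p.2 p.1)
      = ∑ p ∈ (powersetCard (n+1) (univ : Finset U)).sigma (fun S => S), f p.1 := by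
    refine Finset.sum_nbij' (fun p => ⟨insert p.2 p.1, p.2⟩) (fun p => ⟨p.1.erase p.2, p.2⟩)
      ?_ ?_ ?_ ?_ ?_
    · rintro ⟨J, x⟩ hp
      rw [Finset.mem_sigma] at hp ⊢
      obtain ⟨hJ, hx⟩ := hp
      rw [mem_powersetCard_univ] at hJ
      have hxJ : x ∉ J := (Finset.mem_sdiff.1 hx).2
      exact ⟨mem_powersetCard_univ.2 (by rw [Finset.card_insert_of_notMem hxJ, hJ]),
        Finset.mem_insert_self x J⟩
    · rintro ⟨S, x⟩ hp
      rw [Finset.mem_sigma] at hp ⊢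
      obtain ⟨hS, hx⟩ := hp
      rw [mem_powersetCard_univ] at hS
      refine ⟨mem_powersetCard_univ.2 ?_, Finset.mem_sdiff.2 ⟨mem_univ x, Finset.notMem_erase x S⟩⟩
      rw [Finset.card_erase_of_mem hx, hS]; omega
    · rintro ⟨J, x⟩ hp
      rw [Finset.mem_sigma] at hp
      have hxJ : x ∉ J := (Finset.mem_sdiff.1 hp.2).2
      simp [Finset.erase_insert hxJ]
    · rintro ⟨S, x⟩ hp
      rw [Finset.mem_sigma] at hp
      simp [Finset.insert_erase hp.2]
    · rintro ⟨J, x⟩ _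
      rfl
  rw [key, ← rhs]
  rw [Finset.mul_sum]
  refine Finset.sum_congr rfl fun S hS => ?_
  rw [mem_powersetCard_univ] at hS
  rw [Finset.sum_const, hS, nsmul_eq_mul]; push_cast; ring

lemma mgf_bound (T : Finset U) (z : ℝ) (hz : 0 ≤ z) :
    ∀ s : ℕ, s ≤ Fintype.card U →
    ∑ S ∈ powersetCard s (univ : Finset U), z ^ (S ∩ T).card
      ≤ ((Fintype.card U).choose s : ℝ) *
        (1 + (T.card : ℝ) / (Fintype.card U : ℝ) * (z - 1)) ^ s := by
  intro s
  induction s with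
  | zero => intro _; simp
  | succ n ih =>
    intro hsk
    have hnk : n ≤ Fintype.card U := Nat.le_of_succ_le hsk
    have hk1 : 1 ≤ Fintype.card U := le_trans (Nat.succ_le_succ (Nat.zero_le n)) hsk
    have hK0 : (0:ℝ) < (Fintype.card U : ℝ) := by exact_mod_cast hk1
    have hmk : (T.card : ℝ) ≤ (Fintype.card U : ℝ) := by
      exact_mod_cast Finset.card_le_univ T
    have hm0 : (0:ℝ) ≤ (T.card : ℝ) := Nat.cast_nonneg _
    set K : ℝ := (Fintype.card U : ℝ) with hKdef
    set m : ℝ := (T.card : ℝ) with hmdef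
    set ρ : ℝ := 1 + m / K * (z - 1) with hρdef
    have hρeq : ρ = ((K - m) + m * z) / K := by
      rw [hρdef]; field_simp; ring
    have hρ0 : 0 ≤ ρ := by
      rw [hρeq]
      apply div_nonneg _ (le_of_lt hK0)
      nlinarith
    set f : Finset U → ℝ := fun J => z ^ (J ∩ T).card with hfdef
    set g : Finset U → ℝ := fun J => (z - 1) * (m - ((J ∩ T).card : ℝ)) + (K - n) with hgdef
    -- inner sum computation
    have hinner : ∀ J ∈ powersetCard n (univ : Finset U),
        ∑ x ∈ univ \ J, z ^ ((insert x J ∩ T).card) = f J * g J := by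
      intro J hJ
      rw [mem_powersetCard_univ] at hJ
      have hcard : ∀ x ∈ univ \ J,
          z ^ ((insert x J ∩ T).card) = f J * (if x ∈ T then z else 1) := by
        intro x hx
        have hxJ : x ∉ J := (mem_sdiff.1 hx).2
        by_cases hxT : x ∈ T
        · rw [Finset.insert_inter_of_mem hxT,
            Finset.card_insert_of_notMem (fun h => hxJ (mem_of_mem_inter_left h))]
          simp [hxT, hfdef, pow_succ]
        · rw [Finset.insert_inter_of_notMem hxT]
          simp [hxT, hfdef]
      rw [Finset.sum_congr rfl hcard, ← Finset.mul_sum]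
      congr 1
      rw [Finset.sum_ite, Finset.sum_const, Finset.sum_const]
      have e1 : (univ \ J).filter (fun x => x ∈ T) = T \ J := by
        ext x
        simp only [mem_filter, mem_sdiff, mem_univ, true_and]
        tauto
      have hTJ : (((T \ J).card : ℕ) : ℝ) = m - ((J ∩ T).card : ℝ) := by
        have h := Finset.card_inter_add_card_sdiff T J
        rw [Finset.inter_comm] at h
        have := congrArg (fun x : ℕ => (x : ℝ)) h
        push_cast at this
        rw [hmdef]; linarith
      have huJ : (((univ \ J).card : ℕ) : ℝ) = K - n := by
        rw [Finset.card_sdiff_of_subset (subset_univ J), card_univ, hJ, Nat.cast_sub hnk]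
      have e2 : (((univ \ J).filter (fun x => ¬ x ∈ T)).card : ℝ)
          = (K - n) - (m - ((J ∩ T).card : ℝ)) := by
        have hsplit := Finset.card_filter_add_card_filter_not
          (s := univ \ J) (p := fun x => x ∈ T)
        have := congrArg (fun x : ℕ => (x : ℝ)) hsplit
        push_cast at this
        rw [e1] at this
        rw [hTJ] at this
        rw [huJ] at this
        linarith
      rw [e1]
      rw [hgdef]
      simp only [nsmul_eq_mul, mul_one]
      rw [hTJ, e2]
      ring
    have hkey : ((n:ℝ)+1) * ∑ S ∈ powersetCard (n+1) (univ : Finset U), z ^ (S ∩ T).card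
        = ∑ J ∈ powersetCard n (univ : Finset U), f J * g J := by
      rw [← sum_powersetCard_succ n (fun S => z ^ (S ∩ T).card)]
      exact Finset.sum_congr rfl hinner
    -- antivariance
    have hanti : AntivaryOn f g ((powersetCard n (univ : Finset U)) : Set (Finset U)) := by
      intro J _ J' _ hlt
      rw [hgdef] at hlt
      simp only at hlt
      have hba : (z - 1) * ((J' ∩ T).card : ℝ) < (z - 1) * ((J ∩ T).card : ℝ) := by nlinarith
      rcases le_or_gt 1 z with hz1 | hz1
      · have hzgt : 1 < z := by
          rcases eq_or_lt_of_le hz1 with h | h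
          · exfalso; rw [← h] at hba; simp at hba
          · exact h
        have hlt' : ((J' ∩ T).card : ℝ) < ((J ∩ T).card : ℝ) := by nlinarith
        have : (J' ∩ T).card ≤ (J ∩ T).card := by exact_mod_cast le_of_lt hlt'
        exact pow_le_pow_right₀ hz1 this
      · have hlt' : ((J ∩ T).card : ℝ) < ((J' ∩ T).card : ℝ) := by nlinarith
        have : (J ∩ T).card ≤ (J' ∩ T).card := by exact_mod_cast le_of_lt hlt'
        exact pow_le_pow_of_le_one hz (le_of_lt hz1) this
    have hcheb := hanti.card_mul_sum_le_sum_mul_sum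
    rw [Finset.card_powersetCard, Finset.card_univ] at hcheb
    -- sum of g
    have hsumg : ∑ J ∈ powersetCard n (univ : Finset U), g J
        = (K - n) * ((Fintype.card U).choose n : ℝ) * ρ := by
      have hexp : ∑ J ∈ powersetCard n (univ : Finset U), g J
          = (z - 1) * (m * ((Fintype.card U).choose n : ℝ)
              - ∑ J ∈ powersetCard n (univ : Finset U), ((J ∩ T).card : ℝ))
            + (K - n) * ((Fintype.card U).choose n : ℝ) := by
        rw [hgdef]
        rw [Finset.sum_add_distrib, Finset.sum_const, Finset.card_powersetCard, card_univ]
        rw [← Finset.mul_sum, Finset.sum_sub_distrib, Finset.sum_const, Finset.card_powersetCard,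
          card_univ]
        simp only [nsmul_eq_mul]
        ring
      rw [hexp]
      rcases Nat.eq_zero_or_pos n with hn0 | hnpos
      · subst hn0
        have : ∑ J ∈ powersetCard 0 (univ : Finset U), ((J ∩ T).card : ℝ) = 0 := by
          rw [Finset.powersetCard_zero]
          simp
        rw [this]
        simp only [Nat.choose_zero_right, Nat.cast_one, Nat.cast_zero]
        rw [hρeq]
        field_simp
        ring
      · obtain ⟨r, rfl⟩ : ∃ r, n = r + 1 := ⟨n - 1, by omega⟩
        have hsX : ∑ J ∈ powersetCard (r+1) (univ : Finset U), ((J ∩ T).card : ℝ)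
            = m * ((Fintype.card U - 1).choose r : ℝ) := by
          rw [← Nat.cast_sum]
          rw [sum_inter_card T r]
          push_cast
          rw [hmdef]
        rw [hsX]
        have hid : K * ((Fintype.card U - 1).choose r : ℝ)
            = ((r:ℝ) + 1) * ((Fintype.card U).choose (r+1) : ℝ) := by
          have h := Nat.add_one_mul_choose_eq (Fintype.card U - 1) r
          have h2 : Fintype.card U - 1 + 1 = Fintype.card U := by omega
          rw [h2] at h
          have h' := congrArg (fun x : ℕ => (x : ℝ)) h
          push_cast at h'
          rw [hKdef]
          linarith
        rw [hρeq]
        have hKne : K ≠ 0 := ne_of_gt hK0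
        field_simp
        push_cast
        linear_combination (-(m*(z-1))) * hid
    -- combine
    have hCpos : (0:ℝ) < ((Fintype.card U).choose n : ℝ) := by
      exact_mod_cast Nat.choose_pos hnk
    have hMnle := ih hnk
    have hKn0 : (0:ℝ) ≤ K - n := by
      have : (n:ℝ) ≤ K := by rw [hKdef]; exact_mod_cast hnk
      linarith
    have hchoose_id : (K - n) * ((Fintype.card U).choose n : ℝ)
        = ((n:ℝ)+1) * ((Fintype.card U).choose (n+1) : ℝ) := by
      have h := Nat.choose_succ_right_eq (Fintype.card U) n
      have h' := congrArg (fun x : ℕ => (x : ℝ)) h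
      push_cast [Nat.cast_sub hnk] at h'
      rw [hKdef]
      linarith
    set C : ℝ := ((Fintype.card U).choose n : ℝ) with hCdef
    set D : ℝ := ((Fintype.card U).choose (n+1) : ℝ) with hDdef
    set Ms : ℝ := ∑ S ∈ powersetCard (n+1) (univ : Finset U), z ^ (S ∩ T).card with hMsdef
    have h1 : C * (((n:ℝ)+1) * Ms) ≤ (C * ρ ^ n) * ((K - (n:ℝ)) * C * ρ) := by
      rw [hMsdef, hkey]
      calc C * ∑ J ∈ powersetCard n (univ : Finset U), f J * g J
          ≤ (∑ J ∈ powersetCard n (univ : Finset U), f J)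
            * (∑ J ∈ powersetCard n (univ : Finset U), g J) := hcheb
        _ ≤ (C * ρ ^ n) * ((K - (n:ℝ)) * C * ρ) := by
            rw [hsumg]
            apply mul_le_mul_of_nonneg_right hMnle
            positivity
    have h2 : C * (((n:ℝ)+1) * Ms) ≤ C * ((((n:ℝ)+1) * D) * ρ ^ (n+1)) := by
      refine le_trans h1 (le_of_eq ?_)
      rw [← hchoose_id, pow_succ]
      ring
    have h3 : ((n:ℝ)+1) * Ms ≤ (((n:ℝ)+1) * D) * ρ ^ (n+1) :=
      le_of_mul_le_mul_left (by linarith) hCpos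
    have h4 : ((n:ℝ)+1) * Ms ≤ ((n:ℝ)+1) * (D * ρ ^ (n+1)) := by
      calc ((n:ℝ)+1) * Ms ≤ (((n:ℝ)+1) * D) * ρ ^ (n+1) := h3
        _ = ((n:ℝ)+1) * (D * ρ ^ (n+1)) := by ring
    have hfin : Ms ≤ D * ρ ^ (n+1) :=
      le_of_mul_le_mul_left h4 (by positivity)
    exact hfin

lemma rho_pow_le (T : Finset U) {s : ℕ} (hk : 1 ≤ Fintype.card U) (z : ℝ) (hz : 0 ≤ z) :
    (1 + (T.card : ℝ) / (Fintype.card U : ℝ) * (z - 1)) ^ s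
      ≤ Real.exp ((s : ℝ) * ((T.card : ℝ) / (Fintype.card U : ℝ)) * (z - 1)) := by
  have hK0 : (0:ℝ) < (Fintype.card U : ℝ) := by exact_mod_cast hk
  have hρ0 : (0:ℝ) ≤ 1 + (T.card : ℝ) / (Fintype.card U : ℝ) * (z - 1) := by
    have hm1 : (T.card : ℝ) / (Fintype.card U : ℝ) ≤ 1 := by
      rw [div_le_one hK0]; exact_mod_cast Finset.card_le_univ T
    have hm0 : (0:ℝ) ≤ (T.card : ℝ) / (Fintype.card U : ℝ) := by positivity
    nlinarith
  calc (1 + (T.card : ℝ) / (Fintype.card U : ℝ) * (z - 1)) ^ s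
      ≤ (Real.exp ((T.card : ℝ) / (Fintype.card U : ℝ) * (z - 1))) ^ s := by
        apply pow_le_pow_left₀ hρ0
        have := Real.add_one_le_exp ((T.card : ℝ) / (Fintype.card U : ℝ) * (z - 1))
        linarith
    _ = Real.exp ((s : ℝ) * ((T.card : ℝ) / (Fintype.card U : ℝ)) * (z - 1)) := by
        rw [← Real.exp_nat_mul]; ring_nf

section tails
variable (T : Finset U) {s : ℕ} (hs : s ≤ Fintype.card U) (hk : 1 ≤ Fintype.card U)

include hs hk in
lemma tail_upper (z a : ℝ) (hz : 1 ≤ z) (ha : 0 ≤ a) :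
    (((powersetCard s (univ : Finset U)).filter
        (fun S => a ≤ ((S ∩ T).card : ℝ))).card : ℝ)
      ≤ ((Fintype.card U).choose s : ℝ) *
        Real.exp ((s : ℝ) * ((T.card : ℝ) / (Fintype.card U : ℝ)) * (z - 1) - a * Real.log z) := by
  have hz0 : (0:ℝ) < z := lt_of_lt_of_le one_pos hz
  have key : (((powersetCard s (univ : Finset U)).filter
      (fun S => a ≤ ((S ∩ T).card : ℝ))).card : ℝ) * Real.exp (a * Real.log z)
      ≤ ((Fintype.card U).choose s : ℝ) *
        Real.exp ((s : ℝ) * ((T.card : ℝ) / (Fintype.card U : ℝ)) * (z - 1)) := by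
    have h1 : (((powersetCard s (univ : Finset U)).filter
        (fun S => a ≤ ((S ∩ T).card : ℝ))).card : ℝ) * Real.exp (a * Real.log z)
        = ∑ S ∈ (powersetCard s (univ : Finset U)).filter
            (fun S => a ≤ ((S ∩ T).card : ℝ)), Real.exp (a * Real.log z) := by
      rw [Finset.sum_const, nsmul_eq_mul]
    rw [h1]
    calc ∑ S ∈ (powersetCard s (univ : Finset U)).filter
          (fun S => a ≤ ((S ∩ T).card : ℝ)), Real.exp (a * Real.log z)
        ≤ ∑ S ∈ (powersetCard s (univ : Finset U)).filter
            (fun S => a ≤ ((S ∩ T).card : ℝ)), z ^ (S ∩ T).card := by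
          apply Finset.sum_le_sum
          intro S hS
          have hX : a ≤ ((S ∩ T).card : ℝ) := (Finset.mem_filter.1 hS).2
          have : Real.exp (a * Real.log z) = z ^ (a : ℝ) := by
            rw [Real.rpow_def_of_pos hz0]; ring_nf
          rw [this, ← Real.rpow_natCast z]
          exact Real.rpow_le_rpow_of_exponent_le hz hX
      _ ≤ ∑ S ∈ powersetCard s (univ : Finset U), z ^ (S ∩ T).card := by
          apply Finset.sum_le_sum_of_subset_of_nonneg (Finset.filter_subset _ _)
          intro S _ _
          positivity
      _ ≤ ((Fintype.card U).choose s : ℝ) *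
            (1 + (T.card : ℝ) / (Fintype.card U : ℝ) * (z - 1)) ^ s :=
          mgf_bound T z (le_of_lt hz0) s hs
      _ ≤ ((Fintype.card U).choose s : ℝ) *
            Real.exp ((s : ℝ) * ((T.card : ℝ) / (Fintype.card U : ℝ)) * (z - 1)) := by
          apply mul_le_mul_of_nonneg_left (rho_pow_le T hk z (le_of_lt hz0)) (by positivity)
  have hpos : (0:ℝ) < Real.exp (a * Real.log z) := Real.exp_pos _
  rw [Real.exp_sub]
  calc (((powersetCard s (univ : Finset U)).filter
        (fun S => a ≤ ((S ∩ T).card : ℝ))).card : ℝ)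
      = (((powersetCard s (univ : Finset U)).filter
        (fun S => a ≤ ((S ∩ T).card : ℝ))).card : ℝ) * Real.exp (a * Real.log z)
          / Real.exp (a * Real.log z) := by field_simp
    _ ≤ ((Fintype.card U).choose s : ℝ) *
          Real.exp ((s : ℝ) * ((T.card : ℝ) / (Fintype.card U : ℝ)) * (z - 1))
          / Real.exp (a * Real.log z) := (div_le_div_iff_of_pos_right hpos).2 key
    _ = ((Fintype.card U).choose s : ℝ) *
          (Real.exp ((s : ℝ) * ((T.card : ℝ) / (Fintype.card U : ℝ)) * (z - 1))
           / Real.exp (a * Real.log z)) := by ring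
end tails

section tails2
variable (T : Finset U) {s : ℕ} (hs : s ≤ Fintype.card U) (hk : 1 ≤ Fintype.card U)

include hs hk in
lemma tail_lower (z a : ℝ) (hz0 : 0 < z) (hz1 : z ≤ 1) :
    (((powersetCard s (univ : Finset U)).filter
        (fun S => ((S ∩ T).card : ℝ) ≤ a)).card : ℝ)
      ≤ ((Fintype.card U).choose s : ℝ) *
        Real.exp ((s : ℝ) * ((T.card : ℝ) / (Fintype.card U : ℝ)) * (z - 1) - a * Real.log z) := by
  have key : (((powersetCard s (univ : Finset U)).filter
      (fun S => ((S ∩ T).card : ℝ) ≤ a)).card : ℝ) * Real.exp (a * Real.log z)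
      ≤ ((Fintype.card U).choose s : ℝ) *
        Real.exp ((s : ℝ) * ((T.card : ℝ) / (Fintype.card U : ℝ)) * (z - 1)) := by
    have h1 : (((powersetCard s (univ : Finset U)).filter
        (fun S => ((S ∩ T).card : ℝ) ≤ a)).card : ℝ) * Real.exp (a * Real.log z)
        = ∑ S ∈ (powersetCard s (univ : Finset U)).filter
            (fun S => ((S ∩ T).card : ℝ) ≤ a), Real.exp (a * Real.log z) := by
      rw [Finset.sum_const, nsmul_eq_mul]
    rw [h1]
    calc ∑ S ∈ (powersetCard s (univ : Finset U)).filter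
          (fun S => ((S ∩ T).card : ℝ) ≤ a), Real.exp (a * Real.log z)
        ≤ ∑ S ∈ (powersetCard s (univ : Finset U)).filter
            (fun S => ((S ∩ T).card : ℝ) ≤ a), z ^ (S ∩ T).card := by
          apply Finset.sum_le_sum
          intro S hS
          have hX : ((S ∩ T).card : ℝ) ≤ a := (Finset.mem_filter.1 hS).2
          have : Real.exp (a * Real.log z) = z ^ (a : ℝ) := by
            rw [Real.rpow_def_of_pos hz0]; ring_nf
          rw [this, ← Real.rpow_natCast z]
          exact Real.rpow_le_rpow_of_exponent_ge hz0 hz1 hX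
      _ ≤ ∑ S ∈ powersetCard s (univ : Finset U), z ^ (S ∩ T).card := by
          apply Finset.sum_le_sum_of_subset_of_nonneg (Finset.filter_subset _ _)
          intro S _ _
          positivity
      _ ≤ ((Fintype.card U).choose s : ℝ) *
            (1 + (T.card : ℝ) / (Fintype.card U : ℝ) * (z - 1)) ^ s :=
          mgf_bound T z (le_of_lt hz0) s hs
      _ ≤ ((Fintype.card U).choose s : ℝ) *
            Real.exp ((s : ℝ) * ((T.card : ℝ) / (Fintype.card U : ℝ)) * (z - 1)) := by
          apply mul_le_mul_of_nonneg_left (rho_pow_le T hk z (le_of_lt hz0)) (by positivity)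
  have hpos : (0:ℝ) < Real.exp (a * Real.log z) := Real.exp_pos _
  rw [Real.exp_sub]
  calc (((powersetCard s (univ : Finset U)).filter
        (fun S => ((S ∩ T).card : ℝ) ≤ a)).card : ℝ)
      = (((powersetCard s (univ : Finset U)).filter
        (fun S => ((S ∩ T).card : ℝ) ≤ a)).card : ℝ) * Real.exp (a * Real.log z)
          / Real.exp (a * Real.log z) := by field_simp
    _ ≤ ((Fintype.card U).choose s : ℝ) *
          Real.exp ((s : ℝ) * ((T.card : ℝ) / (Fintype.card U : ℝ)) * (z - 1))
          / Real.exp (a * Real.log z) := (div_le_div_iff_of_pos_right hpos).2 key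
    _ = ((Fintype.card U).choose s : ℝ) *
          (Real.exp ((s : ℝ) * ((T.card : ℝ) / (Fintype.card U : ℝ)) * (z - 1))
           / Real.exp (a * Real.log z)) := by ring
end tails2

set_option maxHeartbeats 1600000 in
lemma unusual_count_le (hk : 1 ≤ Fintype.card U)
    (α δ : ℝ) (hα0 : 0 < α) (hα1 : α < 1) (hδ0 : 0 < δ) (hδ1 : δ < 1)
    (s : ℕ) (hs1 : 1 ≤ s) (hsk : s ≤ Fintype.card U) (T : Finset U) :
    (((powersetCard s (univ : Finset U)).filter
        (fun S => UnusualIntersection α δ s T S)).card : ℝ)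
      ≤ 2 * Real.exp (-(α ^ 2 * δ * s) / 3) * ((Fintype.card U).choose s : ℝ) := by
  have hK0 : (0:ℝ) < (Fintype.card U : ℝ) := by exact_mod_cast hk
  set K : ℝ := (Fintype.card U : ℝ) with hKdef
  set m : ℝ := (T.card : ℝ) with hmdef
  have hm0 : (0:ℝ) ≤ m := Nat.cast_nonneg _
  have hmk : m ≤ K := by rw [hmdef, hKdef]; exact_mod_cast Finset.card_le_univ T
  set p : ℝ := m / K with hpdef
  have hp0 : 0 ≤ p := by positivity
  have hp1 : p ≤ 1 := by rw [hpdef, div_le_one hK0]; exact hmk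
  have hs0 : (0:ℝ) ≤ (s:ℝ) := Nat.cast_nonneg s
  have hCpos : (0:ℝ) ≤ ((Fintype.card U).choose s : ℝ) := Nat.cast_nonneg _
  set q : ℝ := Real.exp (-(α ^ 2 * δ * s) / 3) with hqdef
  by_cases hT : δ * K ≤ m
  · -- large T : p ≥ δ
    have hpδ : δ ≤ p := by rw [hpdef, le_div_iff₀ hK0]; linarith
    have hsub : (powersetCard s (univ : Finset U)).filter
          (fun S => UnusualIntersection α δ s T S)
        ⊆ ((powersetCard s (univ : Finset U)).filter
            (fun S => ((S ∩ T).card : ℝ) ≤ (1 - α) * s * m / K))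
          ∪ ((powersetCard s (univ : Finset U)).filter
            (fun S => (1 + α) * s * m / K ≤ ((S ∩ T).card : ℝ))) := by
      intro S hS
      rw [Finset.mem_filter] at hS
      rw [Finset.mem_union, Finset.mem_filter, Finset.mem_filter]
      rcases hS.2 with ⟨_, hout⟩ | ⟨hlt, _⟩
      · rw [Set.mem_Icc, not_and_or, not_le, not_le] at hout
        rcases hout with h | h
        · exact Or.inl ⟨hS.1, le_of_lt h⟩
        · exact Or.inr ⟨hS.1, le_of_lt h⟩
      · exact absurd hlt (not_lt.2 hT)
    have hcard := Finset.card_le_card hsub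
    have hcard2 := le_trans hcard (Finset.card_union_le _ _)
    have hlow : (((powersetCard s (univ : Finset U)).filter
        (fun S => ((S ∩ T).card : ℝ) ≤ (1 - α) * s * m / K)).card : ℝ)
        ≤ ((Fintype.card U).choose s : ℝ) * q := by
      have htl := tail_lower T hsk hk (1 - α) ((1 - α) * s * m / K)
        (by linarith) (by linarith)
      refine le_trans htl (mul_le_mul_of_nonneg_left ?_ hCpos)
      rw [hqdef, Real.exp_le_exp]
      have hexp_eq : (s : ℝ) * (m / K) * ((1 - α) - 1)
          - ((1 - α) * s * m / K) * Real.log (1 - α)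
          = (s : ℝ) * (m / K) * (-α - (1 - α) * Real.log (1 - α)) := by ring
      rw [hexp_eq]
      have haux := chernoff_lower_aux (le_of_lt hα0) hα1
      have hsp : (s:ℝ) * δ ≤ (s:ℝ) * (m / K) := by
        apply mul_le_mul_of_nonneg_left _ hs0
        rw [← hpdef]; exact hpδ
      have hsp0 : 0 ≤ (s:ℝ) * (m / K) := by positivity
      have h1 : (s : ℝ) * (m / K) * (-α - (1 - α) * Real.log (1 - α))
          ≤ (s : ℝ) * (m / K) * (-α^2/2) := mul_le_mul_of_nonneg_left haux hsp0
      have h2 : (s : ℝ) * (m / K) * (-α^2/2) ≤ (s : ℝ) * δ * (-α^2/2) := by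
        have : (0:ℝ) ≤ α^2/2 := by positivity
        nlinarith
      have h3 : (s : ℝ) * δ * (-α^2/2) ≤ -(α ^ 2 * δ * s) / 3 := by
        nlinarith [mul_nonneg (mul_nonneg hs0 (le_of_lt hδ0)) (sq_nonneg α)]
      linarith
    have hup : (((powersetCard s (univ : Finset U)).filter
        (fun S => (1 + α) * s * m / K ≤ ((S ∩ T).card : ℝ))).card : ℝ)
        ≤ ((Fintype.card U).choose s : ℝ) * q := by
      have htu := tail_upper T hsk hk (1 + α) ((1 + α) * s * m / K)
        (by linarith) (by positivity)
      refine le_trans htu (mul_le_mul_of_nonneg_left ?_ hCpos)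
      rw [hqdef, Real.exp_le_exp]
      have hexp_eq : (s : ℝ) * (m / K) * ((1 + α) - 1)
          - ((1 + α) * s * m / K) * Real.log (1 + α)
          = (s : ℝ) * (m / K) * (α - (1 + α) * Real.log (1 + α)) := by ring
      rw [hexp_eq]
      have haux := chernoff_upper_aux (le_of_lt hα0) (le_of_lt hα1)
      have hsp0 : 0 ≤ (s:ℝ) * (m / K) := by positivity
      have h1 : (s : ℝ) * (m / K) * (α - (1 + α) * Real.log (1 + α))
          ≤ (s : ℝ) * (m / K) * (-α^2/3) := mul_le_mul_of_nonneg_left haux hsp0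
      have h2 : (s : ℝ) * (m / K) * (-α^2/3) ≤ (s : ℝ) * δ * (-α^2/3) := by
        have hsp : (s:ℝ) * δ ≤ (s:ℝ) * (m / K) := by
          apply mul_le_mul_of_nonneg_left _ hs0
          rw [← hpdef]; exact hpδ
        have : (0:ℝ) ≤ α^2/3 := by positivity
        nlinarith
      have h3 : (s : ℝ) * δ * (-α^2/3) = -(α ^ 2 * δ * s) / 3 := by ring
      linarith
    have : (((powersetCard s (univ : Finset U)).filter
        (fun S => UnusualIntersection α δ s T S)).card : ℝ)
        ≤ (((powersetCard s (univ : Finset U)).filter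
            (fun S => ((S ∩ T).card : ℝ) ≤ (1 - α) * s * m / K)).card : ℝ)
          + (((powersetCard s (univ : Finset U)).filter
            (fun S => (1 + α) * s * m / K ≤ ((S ∩ T).card : ℝ))).card : ℝ) := by
      exact_mod_cast hcard2
    calc (((powersetCard s (univ : Finset U)).filter
        (fun S => UnusualIntersection α δ s T S)).card : ℝ)
        ≤ _ + _ := this
      _ ≤ ((Fintype.card U).choose s : ℝ) * q + ((Fintype.card U).choose s : ℝ) * q :=
          add_le_add hlow hup
      _ = 2 * q * ((Fintype.card U).choose s : ℝ) := by ring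
  · -- small T : p < δ
    push_neg at hT
    have hpδ : p ≤ δ := by rw [hpdef, div_le_iff₀ hK0]; nlinarith
    have hsub : (powersetCard s (univ : Finset U)).filter
          (fun S => UnusualIntersection α δ s T S)
        ⊆ (powersetCard s (univ : Finset U)).filter
            (fun S => (1 + α) * δ * s ≤ ((S ∩ T).card : ℝ)) := by
      intro S hS
      rw [Finset.mem_filter] at hS ⊢
      rcases hS.2 with ⟨hge, _⟩ | ⟨_, hgt⟩
      · exact absurd hge (not_le.2 hT)
      · exact ⟨hS.1, le_of_lt hgt⟩
    have hcard := Finset.card_le_card hsub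
    have htu := tail_upper T hsk hk (1 + α) ((1 + α) * δ * s)
      (by linarith) (by positivity)
    have hbound : Real.exp ((s : ℝ) * (m / K) * ((1 + α) - 1)
        - ((1 + α) * δ * s) * Real.log (1 + α)) ≤ q := by
      rw [hqdef, Real.exp_le_exp]
      have hlog0 : 0 ≤ Real.log (1 + α) := Real.log_nonneg (by linarith)
      have hstep : (s : ℝ) * (m / K) * ((1 + α) - 1) ≤ (s : ℝ) * δ * α := by
        have : (s:ℝ) * (m/K) ≤ (s:ℝ) * δ := by
          apply mul_le_mul_of_nonneg_left _ hs0
          rw [← hpdef]; exact hpδ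
        nlinarith
      have haux := chernoff_upper_aux (le_of_lt hα0) (le_of_lt hα1)
      have hδs0 : 0 ≤ (s:ℝ) * δ := by positivity
      have h1 : (s : ℝ) * δ * (α - (1 + α) * Real.log (1 + α))
          ≤ (s : ℝ) * δ * (-α^2/3) := mul_le_mul_of_nonneg_left haux hδs0
      have h2 : (s : ℝ) * δ * (-α^2/3) = -(α ^ 2 * δ * s) / 3 := by ring
      nlinarith
    calc (((powersetCard s (univ : Finset U)).filter
        (fun S => UnusualIntersection α δ s T S)).card : ℝ)
        ≤ (((powersetCard s (univ : Finset U)).filter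
            (fun S => (1 + α) * δ * s ≤ ((S ∩ T).card : ℝ))).card : ℝ) := by
          exact_mod_cast hcard
      _ ≤ ((Fintype.card U).choose s : ℝ) *
            Real.exp ((s : ℝ) * (m / K) * ((1 + α) - 1)
              - ((1 + α) * δ * s) * Real.log (1 + α)) := htu
      _ ≤ ((Fintype.card U).choose s : ℝ) * q := mul_le_mul_of_nonneg_left hbound hCpos
      _ ≤ 2 * q * ((Fintype.card U).choose s : ℝ) := by
          have hq0 : 0 ≤ q := le_of_lt (Real.exp_pos _)
          nlinarith

end Aux

set_option maxHeartbeats 1600000 in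
/-- For a fixed `T ⊆ U` and `t` independent uniformly random `s`-element subsets
`S 1, …, S t` of `U`, the probability that more than `4·t·exp(−α²·δ·s/3)` of the sets have
an unusual intersection with `T` is at most `exp(−(t/3)·exp(−α²·δ·s/3))`.  The tuple
`(S 1, …, S t)` of independent uniform `s`-sets is modelled as a uniform element of the
(finite) space of functions `Fin t → {A : Finset U // A.card = s}`, and the probability is
expressed by counting. -/
theorem unusual_intersections_concentration
    {U : Type*} [Fintype U] [DecidableEq U]
    (hk : 1 ≤ Fintype.card U)
    (α δ : ℝ) (hα0 : 0 < α) (hα1 : α < 1) (hδ0 : 0 < δ) (hδ1 : δ < 1)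
    (s : ℕ) (hs1 : 1 ≤ s) (hsk : s ≤ Fintype.card U)
    (t : ℕ) (T : Finset U) :
    (((univ : Finset (Fin t → {A : Finset U // A.card = s})).filter (fun S =>
        4 * t * Real.exp (-(α ^ 2 * δ * s) / 3) <
          (((univ : Finset (Fin t)).filter
              (fun i => UnusualIntersection α δ s T (S i).1)).card : ℝ))).card : ℝ) /
      (Fintype.card (Fin t → {A : Finset U // A.card = s}) : ℝ)
      ≤ Real.exp (-((t : ℝ) / 3) * Real.exp (-(α ^ 2 * δ * s) / 3)) := by
  classical
  set q : ℝ := Real.exp (-(α ^ 2 * δ * s) / 3) with hqdef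
  have hq0 : (0:ℝ) < q := Real.exp_pos _
  have hNnat : Fintype.card {A : Finset U // A.card = s} = (Fintype.card U).choose s := by
    rw [Fintype.card_subtype]
    have h : (univ : Finset (Finset U)).filter (fun A => A.card = s)
        = powersetCard s (univ : Finset U) := by
      rw [Finset.powersetCard_eq_filter, Finset.powerset_univ]
    rw [h, Finset.card_powersetCard, Finset.card_univ]
  have hNpos : 0 < (Fintype.card U).choose s := Nat.choose_pos hsk
  set N : ℝ := ((Fintype.card U).choose s : ℝ) with hNdef
  have hN0 : (0:ℝ) < N := by rw [hNdef]; exact_mod_cast hNpos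
  set B : ℝ := (((univ : Finset {A : Finset U // A.card = s}).filter
      (fun A => UnusualIntersection α δ s T A.1)).card : ℝ) with hBdef
  have hB0 : 0 ≤ B := Nat.cast_nonneg _
  have hB : B ≤ 2 * q * N := by
    have hcardeq : ((univ : Finset {A : Finset U // A.card = s}).filter
        (fun A => UnusualIntersection α δ s T A.1)).card
        = ((powersetCard s (univ : Finset U)).filter
            (fun S => UnusualIntersection α δ s T S)).card := by
      apply Finset.card_nbij (fun A => A.1)
      · intro A hA
        rw [Finset.mem_coe, Finset.mem_filter] at hA
        rw [Finset.mem_coe, Finset.mem_filter]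
        exact ⟨mem_powersetCard_univ.2 A.2, hA.2⟩
      · intro A _ A' _ h
        exact Subtype.ext h
      · intro S hS
        rw [Finset.mem_coe, Finset.mem_filter] at hS
        exact ⟨⟨S, mem_powersetCard_univ.1 hS.1⟩, by
          rw [Finset.mem_coe, Finset.mem_filter]
          exact ⟨Finset.mem_univ _, hS.2⟩, rfl⟩
    rw [hBdef, hcardeq]
    exact unusual_count_le hk α δ hα0 hα1 hδ0 hδ1 s hs1 hsk T
  -- weight function
  set w : {A : Finset U // A.card = s} → ℝ :=
    fun A => if UnusualIntersection α δ s T A.1 then 2 else 1 with hwdef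
  have hsumw : ∑ x : {A : Finset U // A.card = s}, w x = N + B := by
    rw [hwdef]
    rw [Finset.sum_ite, Finset.sum_const, Finset.sum_const]
    have hsplit := Finset.card_filter_add_card_filter_not
      (s := (univ : Finset {A : Finset U // A.card = s}))
      (p := fun A => UnusualIntersection α δ s T A.1)
    have hcast := congrArg (fun x : ℕ => (x : ℝ)) hsplit
    push_cast at hcast
    rw [Finset.card_univ, hNnat] at hcast
    simp only [nsmul_eq_mul, mul_one]
    rw [hBdef, hNdef]
    push_cast
    linarith [hcast]
  -- product over tuples
  have hprodsum : ∑ f : (Fin t → {A : Finset U // A.card = s}),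
      ∏ i : Fin t, w (f i) = (N + B) ^ t := by
    rw [← hsumw]
    rw [← Fintype.piFinset_univ]
    rw [← Finset.prod_univ_sum]
    rw [Finset.prod_const, Finset.card_univ, Fintype.card_fin]
  have hprod_eq : ∀ f : (Fin t → {A : Finset U // A.card = s}),
      ∏ i : Fin t, w (f i)
        = (2:ℝ) ^ (((univ : Finset (Fin t)).filter
            (fun i => UnusualIntersection α δ s T ((f i)).1)).card) := by
    intro f
    rw [hwdef]
    simp only
    rw [Finset.prod_ite, Finset.prod_const, Finset.prod_const]
    simp
  -- main counting bound
  set θ : ℝ := 4 * t * q with hθdef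
  have hθ0 : 0 ≤ θ := by positivity
  set F := (univ : Finset (Fin t → {A : Finset U // A.card = s})).filter (fun S =>
        θ < (((univ : Finset (Fin t)).filter
              (fun i => UnusualIntersection α δ s T (S i).1)).card : ℝ)) with hFdef
  have hmain : (F.card : ℝ) * Real.exp (θ * Real.log 2) ≤ (N + B) ^ t := by
    rw [← hprodsum]
    have h1 : (F.card : ℝ) * Real.exp (θ * Real.log 2)
        = ∑ f ∈ F, Real.exp (θ * Real.log 2) := by
      rw [Finset.sum_const, nsmul_eq_mul]
    rw [h1]
    have h2 : ∑ f ∈ F, Real.exp (θ * Real.log 2) ≤ ∑ f ∈ F, ∏ i : Fin t, w (f i) := by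
      apply Finset.sum_le_sum
      intro f hf
      rw [hprod_eq f]
      have hbc : θ ≤ (((univ : Finset (Fin t)).filter
          (fun i => UnusualIntersection α δ s T ((f i)).1)).card : ℝ) := by
        rw [hFdef] at hf
        exact le_of_lt (Finset.mem_filter.1 hf).2
      have : Real.exp (θ * Real.log 2) = (2:ℝ) ^ (θ : ℝ) := by
        rw [Real.rpow_def_of_pos two_pos]; ring_nf
      rw [this, ← Real.rpow_natCast (2:ℝ)]
      exact Real.rpow_le_rpow_of_exponent_le one_le_two hbc
    refine le_trans h2 (Finset.sum_le_sum_of_subset_of_nonneg (Finset.filter_subset _ _) ?_)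
    intro f _ _
    apply Finset.prod_nonneg
    intro i _
    rw [hwdef]
    by_cases hP : UnusualIntersection α δ s T ((f i)).1 <;> simp [hP]
  have hNB : (N + B) ^ t ≤ N ^ t * Real.exp (2 * t * q) := by
    have h1 : N + B ≤ N * Real.exp (2 * q) := by
      have := Real.add_one_le_exp (2 * q)
      nlinarith
    calc (N + B) ^ t ≤ (N * Real.exp (2 * q)) ^ t := by
          apply pow_le_pow_left₀ (by linarith) h1
      _ = N ^ t * Real.exp (2 * q) ^ t := mul_pow _ _ _
      _ = N ^ t * Real.exp (2 * t * q) := by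
          rw [← Real.exp_nat_mul]; ring_nf
  -- put it together
  have hden : (Fintype.card (Fin t → {A : Finset U // A.card = s}) : ℝ) = N ^ t := by
    rw [Fintype.card_fun, Fintype.card_fin, hNnat, hNdef]
    push_cast
    ring
  rw [hden]
  rw [div_le_iff₀ (by positivity)]
  have hexp_pos : (0:ℝ) < Real.exp (θ * Real.log 2) := Real.exp_pos _
  have hfinal : (F.card : ℝ) ≤ N ^ t * Real.exp (2 * t * q) * Real.exp (-(θ * Real.log 2)) := by
    have h := le_trans hmain hNB
    calc (F.card : ℝ) = (F.card : ℝ) * Real.exp (θ * Real.log 2)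
          * Real.exp (-(θ * Real.log 2)) := by
            rw [mul_assoc, ← Real.exp_add]
            simp
      _ ≤ N ^ t * Real.exp (2 * t * q) * Real.exp (-(θ * Real.log 2)) := by
            apply mul_le_mul_of_nonneg_right h (le_of_lt (Real.exp_pos _))
  refine le_trans hfinal ?_
  rw [mul_assoc, ← Real.exp_add]
  rw [mul_comm (Real.exp _) (N ^ t)]
  apply mul_le_mul_of_nonneg_left _ (by positivity)
  rw [Real.exp_le_exp]
  have hlog2 : (7:ℝ)/12 ≤ Real.log 2 := by
    have := Real.log_two_gt_d9; linarith
  have ht0 : (0:ℝ) ≤ (t:ℝ) := Nat.cast_nonneg t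
  rw [hθdef]
  have key : 2 * (t:ℝ) * q + -(4 * t * q * Real.log 2) ≤ -((t:ℝ) / 3) * q := by
    nlinarith [mul_nonneg ht0 (le_of_lt hq0), mul_nonneg (mul_nonneg ht0 (le_of_lt hq0)) (by linarith : (0:ℝ) ≤ Real.log 2 - 7/12)]
  linarith [key]
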